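/- arXiv:1807.00751 — 6 statements merged into one kernel-verified Lean document; each statement's English description precedes it below -/
import Mathlib

section
/- Let E be a real inner product space (complete, with its induced norm) and let f : E → ℝ be differentiable at every point of the segment between x and y. Suppose f is k-Lipschitz for some real k > 0 and x ≠ y are points of E with f(y) − f(x) = k·‖y − x‖. Then for every t ∈ [0,1], the gradient of f at the point x_t = x + t·(y − x) equals k·(y − x)/‖y − x‖. -/
/-- Theorem 3 of the paper: if a `k`-Lipschitz function `f` on a (complete) real inner
product space attains the Lipschitz bound between `x` and `y`, i.e.
`f y - f x = k * ‖y - x‖`, and `f` is differentiable along the segment from `x` to `y`,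
then the gradient of `f` at every point `x_t = x + t • (y - x)` of the segment equals
`k • (y - x) / ‖y - x‖`. -/
theorem stmt_0 {E : Type*} [NormedAddCommGroup E] [InnerProductSpace ℝ E] [CompleteSpace E]
    (f : E → ℝ) (k : ℝ) (hk : 0 < k) (x y : E) (hxy : x ≠ y)
    (hdiff : ∀ p ∈ segment ℝ x y, DifferentiableAt ℝ f p)
    (hlip : ∀ u v : E, |f u - f v| ≤ k * ‖u - v‖)
    (hattain : f y - f x = k * ‖y - x‖) :
    ∀ t ∈ Set.Icc (0 : ℝ) 1,
      gradient f (x + t • (y - x)) = (k / ‖y - x‖) • (y - x) := by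
  set u := y - x with hu
  have hc : (0 : ℝ) < ‖u‖ := by
    simpa [hu, sub_eq_zero] using (norm_pos_iff.2 (sub_ne_zero.2 (Ne.symm hxy)))
  set c := ‖u‖ with hcdef
  -- membership in the segment
  have hseg : ∀ t ∈ Set.Icc (0 : ℝ) 1, x + t • u ∈ segment ℝ x y := by
    intro t ht
    rw [segment_eq_image' (𝕜 := ℝ)]
    exact ⟨t, ht, rfl⟩
  -- f is affine on the segment
  have haff : ∀ t ∈ Set.Icc (0 : ℝ) 1, f (x + t • u) = f x + t * (k * c) := by
    intro t ht
    obtain ⟨ht0, ht1⟩ := ht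
    have h1 : |f (x + t • u) - f x| ≤ k * (t * c) := by
      have := hlip (x + t • u) x
      simpa [norm_smul, abs_of_nonneg ht0, mul_assoc] using this
    have h2 : |f y - f (x + t • u)| ≤ k * ((1 - t) * c) := by
      have := hlip y (x + t • u)
      have hyx : y - (x + t • u) = (1 - t) • u := by
        rw [hu]; module
      rw [hyx] at this
      simpa [norm_smul, abs_of_nonneg (by linarith : (0:ℝ) ≤ 1 - t), mul_assoc] using this
    have h1' := abs_le.1 h1
    have h2' := abs_le.1 h2
    nlinarith [h1'.1, h1'.2, h2'.1, h2'.2]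
  -- Lipschitz bound on the gradient norm
  have hlipW : LipschitzWith k.toNNReal f := by
    apply LipschitzWith.of_dist_le_mul
    intro a b
    rw [Real.dist_eq, dist_eq_norm]
    simpa [Real.coe_toNNReal k hk.le] using hlip a b
  intro t ht
  set p := x + t • u with hp
  have hdp : DifferentiableAt ℝ f p := hdiff p (hseg t ht)
  set g := gradient f p with hg
  have hgrad : HasGradientAt f g p := hdp.hasGradientAt
  -- norm bound
  have hgle : ‖g‖ ≤ k := by
    have h1 : ‖fderiv ℝ f p‖ ≤ (k.toNNReal : ℝ) := norm_fderiv_le_of_lipschitz ℝ hlipW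
    have h2 : ‖g‖ = ‖fderiv ℝ f p‖ := by
      rw [hg, gradient]
      exact (InnerProductSpace.toDual ℝ E).symm.norm_map _
    rw [h2]
    simpa [Real.coe_toNNReal k hk.le] using h1
  -- directional derivative along u
  have hinner : (inner ℝ g u : ℝ) = k * c := by
    have hφ : HasDerivAt (fun s : ℝ => x + s • u) u t := by
      simpa using ((hasDerivAt_id t).smul_const u).const_add x
    have hcomp : HasDerivAt (fun s : ℝ => f (x + s • u)) ((inner ℝ g u : ℝ)) t := by
      have := hgrad.hasFDerivAt.comp_hasDerivAt t hφ
      simp [InnerProductSpace.toDual_apply_apply, real_inner_comm] at this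
      rw [real_inner_comm] at this
      exact this
    have hW1 : HasDerivWithinAt (fun s : ℝ => f (x + s • u)) ((inner ℝ g u : ℝ))
        (Set.Icc (0:ℝ) 1) t := hcomp.hasDerivWithinAt
    have hW2 : HasDerivWithinAt (fun s : ℝ => f x + s * (k * c)) (k * c)
        (Set.Icc (0:ℝ) 1) t := by
      simpa using (((hasDerivAt_id t).mul_const (k * c)).const_add (f x)).hasDerivWithinAt
    have hW1' : HasDerivWithinAt (fun s : ℝ => f x + s * (k * c)) ((inner ℝ g u : ℝ))
        (Set.Icc (0:ℝ) 1) t :=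
      hW1.congr (fun s hs => (haff s hs).symm) (haff t ht).symm
    have huniq : UniqueDiffWithinAt ℝ (Set.Icc (0:ℝ) 1) t :=
      uniqueDiffOn_Icc zero_lt_one t ht
    rw [← hW1'.derivWithin huniq, hW2.derivWithin huniq]
  -- equality in Cauchy–Schwarz
  have hb : ‖(k / c) • u‖ = k := by
    rw [norm_smul, Real.norm_eq_abs, abs_of_nonneg (div_nonneg hk.le hc.le)]
    field_simp
    exact hcdef.symm
  have hbg : (inner ℝ g ((k / c) • u) : ℝ) = k ^ 2 := by
    rw [real_inner_smul_right, hinner]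
    field_simp
  have hsq : ‖g - (k / c) • u‖ ^ 2 ≤ 0 := by
    rw [norm_sub_sq_real, hbg, hb]
    nlinarith [norm_nonneg g]
  have : g - (k / c) • u = 0 := by
    have := sq_eq_zero_iff.1 (le_antisymm hsq (sq_nonneg _))
    exact norm_eq_zero.1 this
  have := sub_eq_zero.1 this
  simpa [hg, hp, hu, hcdef] using this
end

section
/- Let E be a real normed vector space, f : E → ℝ a k-Lipschitz function (k ≥ 0), and x ≠ y points of E with f(y) − f(x) = k·‖y − x‖. If f is differentiable (Fréchet) at the point x_t = x + t·(y − x) for some t ∈ [0,1], then the derivative of f at x_t applied to the unit vector v = (y − x)/‖y − x‖ equals k; i.e., the directional derivative of f at x_t in the direction from x to y equals k. -/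
/-- Directional-derivative step in the proof of Theorem 3 of the paper: if a `k`-Lipschitz
function `f` on a real normed space attains the Lipschitz bound between `x ≠ y`, and `f` is
Fréchet differentiable at `x_t = x + t • (y - x)` for some `t ∈ [0,1]`, then the derivative
of `f` at `x_t` applied to the unit vector `(y - x)/‖y - x‖` equals `k`. -/
theorem stmt_2 {E : Type*} [NormedAddCommGroup E] [NormedSpace ℝ E]
    (f : E → ℝ) (k : ℝ) (hk : 0 ≤ k) (x y : E) (hxy : x ≠ y)
    (hlip : ∀ u v : E, |f u - f v| ≤ k * ‖u - v‖)
    (hattain : f y - f x = k * ‖y - x‖)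
    (t : ℝ) (ht : t ∈ Set.Icc (0 : ℝ) 1)
    (hdiff : DifferentiableAt ℝ f (x + t • (y - x))) :
    fderiv ℝ f (x + t • (y - x)) (‖y - x‖⁻¹ • (y - x)) = k := by
  obtain ⟨ht0, ht1⟩ := ht
  have hyx : y - x ≠ 0 := sub_ne_zero.2 (Ne.symm hxy)
  have hnorm : (0:ℝ) < ‖y - x‖ := norm_pos_iff.2 hyx
  -- pointwise formula on the segment
  have key : ∀ s : ℝ, 0 ≤ s → s ≤ 1 → f (x + s • (y - x)) = f x + s * (k * ‖y - x‖) := by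
    intro s hs0 hs1
    have h1 : f (x + s • (y - x)) - f x ≤ k * (s * ‖y - x‖) := by
      have := le_trans (le_abs_self _) (hlip (x + s • (y - x)) x)
      have heq : ‖x + s • (y - x) - x‖ = s * ‖y - x‖ := by
        rw [add_sub_cancel_left, norm_smul, Real.norm_eq_abs, abs_of_nonneg hs0]
      rwa [heq] at this
    have h2 : f y - f (x + s • (y - x)) ≤ k * ((1 - s) * ‖y - x‖) := by
      have := le_trans (le_abs_self _) (hlip y (x + s • (y - x)))
      have heq : ‖y - (x + s • (y - x))‖ = (1 - s) * ‖y - x‖ := by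
        have : y - (x + s • (y - x)) = (1 - s) • (y - x) := by
          rw [sub_smul, one_smul]; abel
        rw [this, norm_smul, Real.norm_eq_abs, abs_of_nonneg (by linarith)]
      rwa [heq] at this
    nlinarith [h1, h2, hattain]
  set L := fderiv ℝ f (x + t • (y - x)) with hL
  have hφ : HasDerivAt (fun h : ℝ => x + (t + h) • (y - x)) (y - x) 0 := by
    have h1 : HasDerivAt (fun h : ℝ => t + h) 1 0 := (hasDerivAt_id 0).const_add t
    have h2 := h1.smul_const (y - x)
    simpa using h2.const_add x
  have hg : HasDerivAt (fun h : ℝ => f (x + (t + h) • (y - x))) (L (y - x)) 0 := by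
    have hpt : x + t • (y - x) = x + (t + (0:ℝ)) • (y - x) := by norm_num
    rw [hL, hpt]
    exact (hpt ▸ hdiff.hasFDerivAt).comp_hasDerivAt 0 hφ
  set s : Set ℝ := Set.Icc (-t) (1 - t) with hs
  have h0s : (0:ℝ) ∈ s := ⟨by linarith, by linarith⟩
  have hud : UniqueDiffWithinAt ℝ s 0 :=
    (uniqueDiffOn_Icc (by linarith : (-t) < 1 - t)) 0 h0s
  have hgw : HasDerivWithinAt (fun h : ℝ => f (x + (t + h) • (y - x))) (L (y - x)) s 0 :=
    hg.hasDerivWithinAt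
  have heq : ∀ h ∈ s, (fun h : ℝ => f x + (t + h) * (k * ‖y - x‖)) h
      = f (x + (t + h) • (y - x)) := by
    intro h hh
    rw [key (t + h) (by linarith [hh.1]) (by linarith [hh.2])]
  have haff : HasDerivWithinAt (fun h : ℝ => f x + (t + h) * (k * ‖y - x‖)) (L (y - x)) s 0 :=
    hgw.congr (fun h hh => heq h hh) (heq 0 h0s)
  have haff2 : HasDerivWithinAt (fun h : ℝ => f x + (t + h) * (k * ‖y - x‖))
      (k * ‖y - x‖) s 0 := by
    have h1 : HasDerivAt (fun h : ℝ => f x + (t + h) * (k * ‖y - x‖)) (k * ‖y - x‖) 0 := by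
      have := (((hasDerivAt_id (0:ℝ)).const_add t).mul_const (k * ‖y - x‖)).const_add (f x)
      simpa using this
    exact h1.hasDerivWithinAt
  have hDeq : L (y - x) = k * ‖y - x‖ := by
    have e1 := haff.derivWithin hud
    have e2 := haff2.derivWithin hud
    exact e1.symm.trans e2
  rw [map_smul, hDeq, smul_eq_mul]
  field_simp
end

section
/- Let X be a metric space with Borel probability measures μ and ν, and let φ, ψ : ℝ → ℝ be convex functions differentiable at a point a ∈ ℝ with φ'(a) > 0 and φ'(a) + ψ'(a) = 0. Let λ > 0, let K ≥ 0, and let f : X → ℝ be a K-Lipschitz function such that f, φ∘f are integrable with respect to μ and f, ψ∘f are integrable with respect to ν. Let W ≥ 0 be a real number such that ∫ g dν − ∫ g dμ ≤ W for every integrable 1-Lipschitz function g : X → ℝ. Then ∫ φ(f(x)) dμ(x) + ∫ ψ(f(x)) dν(x) + λ·K² ≥ φ(a) + ψ(a) − (φ'(a)·W)²/(4λ). -/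
open MeasureTheory

/-- Tangent line inequality for a convex function. -/
lemma tangent_le_of_convex {g : ℝ → ℝ} (hg : ConvexOn ℝ Set.univ g) {a g' : ℝ}
    (hd : HasDerivAt g g' a) (t : ℝ) : g a + g' * (t - a) ≤ g t := by
  rcases lt_trichotomy t a with h | h | h
  · have hs := hg.slope_le_of_hasDerivAt (Set.mem_univ t) (Set.mem_univ a) h hd
    rw [slope_def_field] at hs
    have hta : t - a < 0 := by linarith
    have : (g a - g t) / (a - t) ≤ g' := by
      have : (g t - g a) / (t - a) = (g a - g t) / (a - t) := by
        rw [div_eq_div_iff (by linarith) (by linarith)]; ring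
      linarith [hs, this ▸ hs]
    nlinarith [(div_le_iff₀ (by linarith : (0:ℝ) < a - t)).mp this]
  · simp [h]
  · have hs := hg.le_slope_of_hasDerivAt (Set.mem_univ a) (Set.mem_univ t) h hd
    rw [slope_def_field] at hs
    nlinarith [(le_div_iff₀ (by linarith : (0:ℝ) < t - a)).mp hs]

/-- Theorem 6 of the paper (Appendix G): under the objective family condition (φ, ψ convex,
differentiable at `a` with `φ'(a) > 0` and `φ'(a) + ψ'(a) = 0`), the Lipschitz-regularized
discriminator objective `∫ φ∘f dμ + ∫ ψ∘f dν + λ K²` (with `f` a `K`-Lipschitz discriminator)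
is bounded below by `φ(a) + ψ(a) - (φ'(a)·W)²/(4λ)`, where `W` bounds the Kantorovich dual
form of the 1-Wasserstein distance between `ν` and `μ`. -/
theorem stmt_6 {X : Type*} [MetricSpace X] [MeasurableSpace X] [BorelSpace X]
    (μ ν : Measure X) [IsProbabilityMeasure μ] [IsProbabilityMeasure ν]
    (φ ψ : ℝ → ℝ) (hφc : ConvexOn ℝ Set.univ φ) (hψc : ConvexOn ℝ Set.univ ψ)
    (a φ' ψ' : ℝ) (hφd : HasDerivAt φ φ' a) (hψd : HasDerivAt ψ ψ' a)
    (hφ'pos : 0 < φ') (hsum : φ' + ψ' = 0)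
    (lam : ℝ) (hlam : 0 < lam) (K : ℝ) (hK : 0 ≤ K)
    (f : X → ℝ) (hf : ∀ u v : X, |f u - f v| ≤ K * dist u v)
    (hfμ : Integrable f μ) (hφfμ : Integrable (fun x => φ (f x)) μ)
    (hfν : Integrable f ν) (hψfν : Integrable (fun x => ψ (f x)) ν)
    (W : ℝ) (hW : 0 ≤ W)
    (hWbound : ∀ g : X → ℝ, (∀ u v : X, |g u - g v| ≤ 1 * dist u v) →
      Integrable g μ → Integrable g ν →
      (∫ x, g x ∂ν) - ∫ x, g x ∂μ ≤ W) :
    φ a + ψ a - (φ' * W) ^ 2 / (4 * lam) ≤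
      (∫ x, φ (f x) ∂μ) + (∫ x, ψ (f x) ∂ν) + lam * K ^ 2 := by
  have hψ' : ψ' = -φ' := by linarith
  -- tangent lower bound for the φ integral
  have hμint : Integrable (fun x => φ a + φ' * (f x - a)) μ :=
    (integrable_const _).add ((hfμ.sub (integrable_const a)).const_mul φ')
  have hνint : Integrable (fun x => ψ a + ψ' * (f x - a)) ν :=
    (integrable_const _).add ((hfν.sub (integrable_const a)).const_mul ψ')
  have hμmono : ∫ x, (φ a + φ' * (f x - a)) ∂μ ≤ ∫ x, φ (f x) ∂μ :=
    integral_mono hμint hφfμ fun x => tangent_le_of_convex hφc hφd (f x)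
  have hνmono : ∫ x, (ψ a + ψ' * (f x - a)) ∂ν ≤ ∫ x, ψ (f x) ∂ν :=
    integral_mono hνint hψfν fun x => tangent_le_of_convex hψc hψd (f x)
  have h1μ : Integrable (fun x => φ' * (f x - a)) μ :=
    (hfμ.sub (integrable_const a)).const_mul φ'
  have h1ν : Integrable (fun x => ψ' * (f x - a)) ν :=
    (hfν.sub (integrable_const a)).const_mul ψ'
  have h2μ : Integrable (fun x => f x - a) μ := hfμ.sub (integrable_const a)
  have h2ν : Integrable (fun x => f x - a) ν := hfν.sub (integrable_const a)
  have hμcalc : ∫ x, (φ a + φ' * (f x - a)) ∂μ = φ a + φ' * ((∫ x, f x ∂μ) - a) := by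
    rw [integral_add (integrable_const _) h1μ, integral_const, integral_const_mul,
      integral_sub hfμ (integrable_const a), integral_const]
    simp
  have hνcalc : ∫ x, (ψ a + ψ' * (f x - a)) ∂ν = ψ a + ψ' * ((∫ x, f x ∂ν) - a) := by
    rw [integral_add (integrable_const _) h1ν, integral_const, integral_const_mul,
      integral_sub hfν (integrable_const a), integral_const]
    simp
  -- Wasserstein bound: ∫ f dν − ∫ f dμ ≤ K * W
  have hWass : (∫ x, f x ∂ν) - ∫ x, f x ∂μ ≤ K * W := by
    rcases eq_or_lt_of_le hK with hK0 | hKpos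
    · -- K = 0: f is constant
      have hXne : Nonempty X := by
        by_contra h
        have : μ Set.univ = 0 := by
          simp [Set.univ_eq_empty_iff.mpr (not_nonempty_iff.mp h)]
        simp [measure_univ] at this
      obtain ⟨x₀⟩ := hXne
      have hconst : ∀ x, f x = f x₀ := by
        intro x
        have := hf x x₀
        rw [← hK0] at this
        simp at this
        have : |f x - f x₀| ≤ 0 := by simpa using this
        have := abs_nonpos_iff.mp this
        linarith [sub_eq_zero.mp this]
      have h1 : ∫ x, f x ∂ν = f x₀ := by
        simp_rw [hconst]; simp
      have h2 : ∫ x, f x ∂μ = f x₀ := by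
        simp_rw [hconst]; simp
      rw [h1, h2, ← hK0]
      simp
    · -- K > 0: use g = f / K
      set g : X → ℝ := fun x => f x / K with hg
      have hglip : ∀ u v : X, |g u - g v| ≤ 1 * dist u v := by
        intro u v
        have : |f u - f v| ≤ K * dist u v := hf u v
        rw [hg]
        simp only [one_mul]
        rw [div_sub_div_same, abs_div, abs_of_pos hKpos, div_le_iff₀ hKpos]
        linarith [this]
      have hgμ : Integrable g μ := hfμ.div_const K
      have hgν : Integrable g ν := hfν.div_const K
      have := hWbound g hglip hgμ hgν
      have h1 : ∫ x, g x ∂ν = (∫ x, f x ∂ν) / K := by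
        simp [hg, integral_div]
      have h2 : ∫ x, g x ∂μ = (∫ x, f x ∂μ) / K := by
        simp [hg, integral_div]
      rw [h1, h2, div_sub_div_same, div_le_iff₀ hKpos] at this
      linarith [this]
  -- combine
  have key : φ' * (K * W) - lam * K ^ 2 ≤ (φ' * W) ^ 2 / (4 * lam) := by
    rw [le_div_iff₀ (by linarith : (0:ℝ) < 4 * lam)]
    nlinarith [sq_nonneg (2 * lam * K - φ' * W), hlam]
  have hIν := (∫ x, f x ∂ν)
  calc φ a + ψ a - (φ' * W) ^ 2 / (4 * lam)
      ≤ φ a + ψ a - (φ' * (K * W) - lam * K ^ 2) := by linarith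
    _ ≤ (φ a + φ' * ((∫ x, f x ∂μ) - a)) + (ψ a + ψ' * ((∫ x, f x ∂ν) - a)) + lam * K ^ 2 := by
        rw [hψ']
        have : φ' * ((∫ x, f x ∂ν) - (∫ x, f x ∂μ)) ≤ φ' * (K * W) :=
          mul_le_mul_of_nonneg_left hWass hφ'pos.le
        nlinarith [this]
    _ ≤ (∫ x, φ (f x) ∂μ) + (∫ x, ψ (f x) ∂ν) + lam * K ^ 2 := by
        rw [← hμcalc, ← hνcalc]; linarith
end

section
/- Let φ, ψ : ℝ → ℝ be differentiable convex functions with φ'(t) > 0 for all t and ψ'(t) < 0 for all t, and suppose there exists a ∈ ℝ with φ'(a) + ψ'(a) = 0. Then for every β ≥ 0, the function J(α) = φ(α) + ψ(α + β) is convex and attains a global minimum: there exists α₀ ∈ ℝ such that φ(α₀) + ψ(α₀ + β) ≤ φ(α) + ψ(α + β) for all α ∈ ℝ. -/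
/-- Lemma 3 of the paper (Appendix G): if `φ` is differentiable, convex with `φ' > 0`
everywhere, `ψ` is differentiable, convex with `ψ' < 0` everywhere, and
`φ'(a) + ψ'(a) = 0` for some `a`, then for every `β ≥ 0` the two-point discriminator
objective `J(α) = φ(α) + ψ(α + β)` is convex and attains a global minimum. -/
theorem stmt_7 (φ ψ : ℝ → ℝ) (hφd : Differentiable ℝ φ) (hψd : Differentiable ℝ ψ)
    (hφc : ConvexOn ℝ Set.univ φ) (hψc : ConvexOn ℝ Set.univ ψ)
    (hφ' : ∀ t : ℝ, 0 < deriv φ t) (hψ' : ∀ t : ℝ, deriv ψ t < 0)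
    (a : ℝ) (ha : deriv φ a + deriv ψ a = 0)
    (β : ℝ) (hβ : 0 ≤ β) :
    ConvexOn ℝ Set.univ (fun α : ℝ => φ α + ψ (α + β)) ∧
    ∃ α₀ : ℝ, ∀ α : ℝ, φ α₀ + ψ (α₀ + β) ≤ φ α + ψ (α + β) := by
  set J : ℝ → ℝ := fun α : ℝ => φ α + ψ (α + β) with hJ
  have hJd : ∀ t : ℝ, HasDerivAt J (deriv φ t + deriv ψ (t + β)) t := by
    intro t
    have h1 : HasDerivAt (fun α : ℝ => α + β) 1 t := (hasDerivAt_id t).add_const β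
    have h2 : HasDerivAt (fun α : ℝ => ψ (α + β)) (deriv ψ (t + β) * 1) t :=
      ((hψd (t + β)).hasDerivAt).comp t h1
    have h3 := ((hφd t).hasDerivAt).add h2
    rw [mul_one] at h3
    exact h3
  have hJdiff : Differentiable ℝ J := fun t => (hJd t).differentiableAt
  have hφmono : Monotone (deriv φ) := by
    have := hφc.monotoneOn_deriv (fun x _ => hφd x)
    intro x y hxy; exact this (Set.mem_univ x) (Set.mem_univ y) hxy
  have hψmono : Monotone (deriv ψ) := by
    have := hψc.monotoneOn_deriv (fun x _ => hψd x)
    intro x y hxy; exact this (Set.mem_univ x) (Set.mem_univ y) hxy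
  have hJderiv : ∀ t : ℝ, deriv J t = deriv φ t + deriv ψ (t + β) := fun t => (hJd t).deriv
  have hJconv : ConvexOn ℝ Set.univ J := by
    apply Monotone.convexOn_univ_of_deriv hJdiff
    intro x y hxy
    rw [hJderiv x, hJderiv y]
    exact add_le_add (hφmono hxy) (hψmono (by linarith))
  refine ⟨hJconv, ?_⟩
  -- find a critical point in [a - β, a] via Darboux
  have hab : a - β ≤ a := by linarith
  have hlow : deriv φ (a - β) + deriv ψ (a - β + β) ≤ 0 := by
    have h1 : deriv φ (a - β) ≤ deriv φ a := hφmono (by linarith)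
    have : a - β + β = a := by ring
    rw [this]; linarith
  have hhigh : 0 ≤ deriv φ a + deriv ψ (a + β) := by
    have h2 : deriv ψ a ≤ deriv ψ (a + β) := hψmono (by linarith)
    linarith
  obtain ⟨c, hc, hc0⟩ := exists_hasDerivWithinAt_eq_of_ge_of_le hab
    (f := J) (f' := fun t => deriv φ t + deriv ψ (t + β))
    (fun x _ => (hJd x).hasDerivWithinAt) hlow hhigh
  have hcJ : deriv J c = 0 := by rw [hJderiv c]; exact hc0
  refine ⟨c, fun α => ?_⟩
  rcases lt_trichotomy α c with h | h | h
  · have hs : slope J α c ≤ deriv J c :=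
      hJconv.slope_le_deriv (Set.mem_univ α) (Set.mem_univ c) h (hJdiff c)
    rw [hcJ] at hs
    rw [slope_def_field] at hs
    have hcα : 0 < c - α := by linarith
    have := div_nonpos_iff.mp hs
    rcases this with ⟨h1, h2⟩ | ⟨h1, h2⟩
    · linarith
    · show J c ≤ J α; linarith
  · subst h; exact le_refl _
  · have hs : deriv J c ≤ slope J c α :=
      hJconv.deriv_le_slope (Set.mem_univ c) (Set.mem_univ α) h (hJdiff c)
    rw [hcJ] at hs
    rw [slope_def_field] at hs
    have hcα : 0 < α - c := by linarith
    have := div_nonneg_iff.mp hs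
    rcases this with ⟨h1, h2⟩ | ⟨h1, h2⟩
    · show J c ≤ J α; linarith
    · linarith
end

section
/- Let p > 0 and q > 0 be real numbers. The function F(t) = p·log(1 + exp(t)) + q·log(1 + exp(−t)) on ℝ attains its unique global minimum at t* = log(q/p); that is, for every t ≠ log(q/p), F(log(q/p)) < F(t). -/
/-- The paper's claim (Table 1) that the optimal discriminative function of the
JS-divergence GAN is `f*(x) = log (P_r(x) / P_g(x))`: for fake density `p > 0` and real
density `q > 0`, the pointwise loss `F(t) = p·log(1 + eᵗ) + q·log(1 + e⁻ᵗ)` attains its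
unique global minimum at `t* = log (q / p)`. -/
theorem stmt_11 (p q : ℝ) (hp : 0 < p) (hq : 0 < q)
    (t : ℝ) (ht : t ≠ Real.log (q / p)) :
    p * Real.log (1 + Real.exp (Real.log (q / p))) +
        q * Real.log (1 + Real.exp (-(Real.log (q / p)))) <
      p * Real.log (1 + Real.exp t) + q * Real.log (1 + Real.exp (-t)) := by
  have hu : (0:ℝ) < Real.exp t := Real.exp_pos t
  set u := Real.exp t with hu_def
  have hqp : (0:ℝ) < q / p := div_pos hq hp
  have hpq : (0:ℝ) < p + q := by linarith
  have h1u : (0:ℝ) < 1 + u := by linarith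
  have hexp1 : Real.exp (Real.log (q / p)) = q / p := Real.exp_log hqp
  have hexp2 : Real.exp (-(Real.log (q / p))) = p / q := by
    rw [Real.exp_neg, hexp1, inv_div]
  have hexp3 : Real.exp (-t) = u⁻¹ := by rw [Real.exp_neg]
  rw [hexp1, hexp2, hexp3]
  have e1 : (1:ℝ) + q / p = (p + q) / p := by field_simp
  have e2 : (1:ℝ) + p / q = (p + q) / q := by field_simp; ring
  have e3 : (1:ℝ) + u⁻¹ = (1 + u) / u := by field_simp; ring
  rw [e1, e2, e3, Real.log_div hpq.ne' hp.ne', Real.log_div hpq.ne' hq.ne',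
    Real.log_div h1u.ne' hu.ne']
  -- key quantities
  have hun : u ≠ q / p := by
    intro h
    exact ht (by rw [← Real.log_exp t, ← hu_def, h])
  set a : ℝ := p * (1 + u) / (p + q) with ha_def
  set b : ℝ := q * (1 + u) / (u * (p + q)) with hb_def
  have ha : (0:ℝ) < a := by positivity
  have hb : (0:ℝ) < b := by positivity
  have ha1 : a ≠ 1 := by
    intro h
    apply hun
    have : p * (1 + u) = p + q := by
      rw [ha_def, div_eq_one_iff_eq hpq.ne'] at h
      linarith
    field_simp
    linarith
  have key1 : Real.log a⁻¹ < a⁻¹ - 1 :=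
    Real.log_lt_sub_one_of_pos (by positivity) (by simpa using ha1)
  have key2 : Real.log b⁻¹ ≤ b⁻¹ - 1 :=
    Real.log_le_sub_one_of_pos (by positivity)
  rw [Real.log_inv] at key1 key2
  have loga : Real.log a = Real.log p + Real.log (1 + u) - Real.log (p + q) := by
    rw [ha_def, Real.log_div (by positivity) hpq.ne', Real.log_mul hp.ne' h1u.ne']
  have logb : Real.log b = Real.log q + Real.log (1 + u) - Real.log u - Real.log (p + q) := by
    rw [hb_def, Real.log_div (by positivity) (by positivity),
      Real.log_mul hq.ne' h1u.ne', Real.log_mul hu.ne' hpq.ne']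
    ring
  have pa : p * a⁻¹ = (p + q) / (1 + u) := by
    rw [ha_def]; field_simp
  have qb : q * b⁻¹ = u * (p + q) / (1 + u) := by
    rw [hb_def]; field_simp
  have hsum : (p + q) / (1 + u) + u * (p + q) / (1 + u) = p + q := by
    field_simp
  nlinarith [mul_lt_mul_of_pos_left key1 hp, mul_le_mul_of_nonneg_left key2 hq.le]
end

section
/- Let E be a real normed vector space, x ≠ y points of E, φ : ℝ → ℝ strictly increasing, ψ : ℝ → ℝ strictly decreasing, and λ > 0. Suppose f : E → ℝ is K-Lipschitz (K ≥ 0) and is optimal for the Lipschitz-regularized two-point objective, i.e., for every L ≥ 0 and every L-Lipschitz function g : E → ℝ, φ(f(x)) + ψ(f(y)) + λ·K² ≤ φ(g(x)) + ψ(g(y)) + λ·L². Then f(y) − f(x) = K·‖y − x‖; i.e., the optimal discriminator attains its Lipschitz bound between the fake point x and the real point y. -/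
/-- Instance of Theorems 1(b) and 2 of the paper for two Dirac distributions (Appendix G):
if `f` is `K`-Lipschitz and optimal for the Lipschitz-regularized two-point objective
`φ(f x) + ψ(f y) + λ K²` (with `φ` strictly increasing, `ψ` strictly decreasing, `λ > 0`),
i.e., no `L`-Lipschitz `g` achieves a smaller objective value, then the optimal discriminator
attains its Lipschitz bound between the fake point `x` and the real point `y`:
`f y - f x = K * ‖y - x‖`. -/
theorem stmt_17 {E : Type*} [NormedAddCommGroup E] [NormedSpace ℝ E]
    (x y : E) (hxy : x ≠ y)
    (φ ψ : ℝ → ℝ) (hφ : StrictMono φ) (hψ : StrictAnti ψ)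
    (lam : ℝ) (hlam : 0 < lam)
    (K : ℝ) (hK : 0 ≤ K) (f : E → ℝ)
    (hf : ∀ u v : E, |f u - f v| ≤ K * ‖u - v‖)
    (hopt : ∀ L : ℝ, 0 ≤ L → ∀ g : E → ℝ, (∀ u v : E, |g u - g v| ≤ L * ‖u - v‖) →
      φ (f x) + ψ (f y) + lam * K ^ 2 ≤ φ (g x) + ψ (g y) + lam * L ^ 2) :
    f y - f x = K * ‖y - x‖ := by
  set d : ℝ := ‖y - x‖ with hd
  have hdpos : 0 < d := by
    simpa [hd] using norm_pos_iff.mpr (sub_ne_zero.mpr hxy.symm)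
  have hle : f y - f x ≤ K * d := by
    have := hf y x
    exact (abs_le.mp this).2
  rcases lt_or_ge (f y - f x) 0 with hneg | hpos
  · -- constant g = f x beats f
    exfalso
    have h0 := hopt 0 le_rfl (fun _ => f x) (by
      intro u v; simp)
    have hψlt : ψ (f x) < ψ (f y) := hψ (by linarith)
    have hK2 : 0 ≤ lam * K ^ 2 := by positivity
    beta_reduce at h0
    nlinarith
  · rcases eq_or_lt_of_le hle with heq | hlt
    · exact heq
    · exfalso
      set L : ℝ := (f y - f x) / d with hL
      have hL0 : 0 ≤ L := div_nonneg hpos hdpos.le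
      have hLK : L < K := (div_lt_iff₀ hdpos).mpr (by linarith [mul_comm K d])
      have hLd : L * d = f y - f x := div_mul_cancel₀ _ hdpos.ne'
      set g : E → ℝ := fun u => f x + L * ‖u - x‖ with hg
      have hglip : ∀ u v : E, |g u - g v| ≤ L * ‖u - v‖ := by
        intro u v
        have h1 : |‖u - x‖ - ‖v - x‖| ≤ ‖u - v‖ := by
          have := abs_norm_sub_norm_le (u - x) (v - x)
          simpa [sub_sub_sub_cancel_right] using this
        calc |g u - g v| = L * |‖u - x‖ - ‖v - x‖| := by
              simp [hg, ← mul_sub, abs_mul, abs_of_nonneg hL0]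
          _ ≤ L * ‖u - v‖ := by
              exact mul_le_mul_of_nonneg_left h1 hL0
      have h0 := hopt L hL0 g hglip
      have hgx : g x = f x := by simp [hg]
      have hgy : g y = f y := by
        simp only [hg]
        rw [← hd]
        linarith [hLd]
      rw [hgx, hgy] at h0
      have : lam * L ^ 2 < lam * K ^ 2 := by
        have : L ^ 2 < K ^ 2 := by nlinarith
        exact mul_lt_mul_of_pos_left this hlam
      linarith
end
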